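/- Let f, g : ℕ → ℕ with 1 ≤ g(k) < f(k) for all k, and let 0 = n_0 < n_1 < n_2 < ⋯ be a strictly increasing sequence of natural numbers. Define f', g' : ℕ → ℕ by f'(i) = f(n_i)·f(n_i+1)⋯f(n_{i+1}−1) and g'(i) = g(n_i)·g(n_i+1)⋯g(n_{i+1}−1). Then 𝔠(f',g') ≤ 𝔠(f,g). -/

import Mathlib

/-- `B` is a `g`-slalom: a sequence of finite sets of naturals with `|B k| = g k`. -/
def IsSlalom (g : ℕ → ℕ) (B : ℕ → Finset ℕ) : Prop := ∀ k, (B k).card = g k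

/-- `x` is covered by the slalom `B`. -/
def Covers (B : ℕ → Finset ℕ) (x : ℕ → ℕ) : Prop := ∀ k, x k ∈ B k

/-- `slalomCov f g` is the least cardinality of a family of `g`-slaloms covering
every `x : ℕ → ℕ` with `x k < f k` for all `k`. -/
noncomputable def slalomCov (f g : ℕ → ℕ) : Cardinal :=
  sInf { c : Cardinal | ∃ 𝓑 : Set (ℕ → Finset ℕ),
    (∀ B ∈ 𝓑, IsSlalom g B) ∧
    (∀ x : ℕ → ℕ, (∀ k, x k < f k) → ∃ B ∈ 𝓑, Covers B x) ∧
    c = Cardinal.mk 𝓑 }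

theorem slalomCov_prod_le (f g : ℕ → ℕ) (hg : ∀ k, 1 ≤ g k) (hgf : ∀ k, g k < f k)
    (n : ℕ → ℕ) (hn0 : n 0 = 0) (hn : StrictMono n) :
    slalomCov (fun i => ∏ k ∈ Finset.Ico (n i) (n (i + 1)), f k)
      (fun i => ∏ k ∈ Finset.Ico (n i) (n (i + 1)), g k) ≤ slalomCov f g := by
  classical
  -- block index: every k lies in a unique block [n i, n (i+1))
  have hex : ∀ k, ∃ i, n i ≤ k ∧ k < n (i + 1) := by
    intro k
    have hne : ∃ i, k < n (i + 1) :=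
      ⟨k, lt_of_lt_of_le (Nat.lt_succ_self k) hn.le_apply⟩
    refine ⟨Nat.find hne, ?_, Nat.find_spec hne⟩
    rcases Nat.eq_zero_or_pos (Nat.find hne) with h | h
    · rw [h, hn0]; exact Nat.zero_le k
    · have hmin := Nat.find_min hne (Nat.pred_lt h.ne')
      simp only [Nat.pred_eq_sub_one] at hmin
      rw [Nat.sub_add_cancel h] at hmin
      omega
  choose idx hidx1 hidx2 using hex
  have huniq : ∀ i k, n i ≤ k → k < n (i + 1) → idx k = i := by
    intro i k h1 h2
    have hm1 := hidx1 k
    have hm2 := hidx2 k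
    by_contra hne'
    rcases Nat.lt_or_ge (idx k) i with h | h
    · have := hn.monotone (show idx k + 1 ≤ i from h)
      omega
    · have h' : i < idx k := lt_of_le_of_ne h (Ne.symm hne')
      have := hn.monotone (show i + 1 ≤ idx k from h')
      omega
  -- product formulas over blocks
  have hprodf : ∀ i, (∏ j : Fin (n (i + 1) - n i), f (n i + (j : ℕ)))
      = ∏ k ∈ Finset.Ico (n i) (n (i + 1)), f k := by
    intro i
    rw [Finset.prod_Ico_eq_prod_range]
    exact Fin.prod_univ_eq_prod_range (fun j => f (n i + j)) _
  have hprodg : ∀ i, (∏ j : Fin (n (i + 1) - n i), g (n i + (j : ℕ)))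
      = ∏ k ∈ Finset.Ico (n i) (n (i + 1)), g k := by
    intro i
    rw [Finset.prod_Ico_eq_prod_range]
    exact Fin.prod_univ_eq_prod_range (fun j => g (n i + j)) _
  -- padded version of a slalom: exactly g k elements, all < f k
  have htilde : ∀ (B : ℕ → Finset ℕ) (k : ℕ), ∃ u : Finset ℕ,
      ((B k).card = g k → B k ∩ Finset.Iio (f k) ⊆ u) ∧
      u ⊆ Finset.Iio (f k) ∧ u.card = g k := by
    intro B k
    by_cases h : (B k ∩ Finset.Iio (f k)).card ≤ g k
    · obtain ⟨u, hu1, hu2, hu3⟩ := Finset.exists_subsuperset_card_eq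
        (Finset.inter_subset_right (s₁ := B k) (s₂ := Finset.Iio (f k))) h
        (by rw [Nat.card_Iio]; exact (hgf k).le)
      exact ⟨u, fun _ => hu1, hu2, hu3⟩
    · obtain ⟨u, hu1, hu2⟩ := Finset.exists_subset_card_eq (s := Finset.Iio (f k)) (n := g k)
        (by rw [Nat.card_Iio]; exact (hgf k).le)
      exact ⟨u, fun hc =>
        absurd (le_trans (Finset.card_le_card Finset.inter_subset_left) hc.le) h, hu1, hu2⟩
  choose tB htBsub htBIio htBcard using htilde
  have hbound : ∀ (B : ℕ → Finset ℕ) (k : ℕ), ∀ m ∈ tB B k, m < f k :=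
    fun B k m hm => Finset.mem_Iio.mp (htBIio B k hm)
  -- the transform
  set T : (ℕ → Finset ℕ) → ℕ → Finset ℕ := fun B i =>
    (Fintype.piFinset fun j : Fin (n (i + 1) - n i) =>
        (tB B (n i + (j : ℕ))).attachFin (fun m hm => hbound B (n i + (j : ℕ)) m hm)).image
      (fun t => ((finPiFinEquiv t : Fin _) : ℕ)) with hT
  have hTdef : ∀ B i, T B i =
      (Fintype.piFinset fun j : Fin (n (i + 1) - n i) =>
        (tB B (n i + (j : ℕ))).attachFin (fun m hm => hbound B (n i + (j : ℕ)) m hm)).image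
      (fun t => ((finPiFinEquiv t : Fin _) : ℕ)) := fun B i => rfl
  -- nonemptiness of the defining set for slalomCov f g
  have hne : { c : Cardinal | ∃ 𝓑 : Set (ℕ → Finset ℕ),
      (∀ B ∈ 𝓑, IsSlalom g B) ∧
      (∀ x : ℕ → ℕ, (∀ k, x k < f k) → ∃ B ∈ 𝓑, Covers B x) ∧
      c = Cardinal.mk 𝓑 }.Nonempty := by
    refine ⟨_, {B | IsSlalom g B}, fun B hB => hB, ?_, rfl⟩
    intro x hx
    refine ⟨fun k => (Finset.range (g k)).image fun m => x k + m, ?_, ?_⟩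
    · intro k
      rw [Finset.card_image_of_injective _ (add_right_injective (x k)), Finset.card_range]
    · intro k
      exact Finset.mem_image.mpr ⟨0, Finset.mem_range.mpr (hg k), add_zero _⟩
  obtain ⟨𝓑, hB1, hB2, hB3⟩ := csInf_mem hne
  -- the transformed family is a family of g'-slaloms
  have hS1 : ∀ B' ∈ T '' 𝓑, IsSlalom
      (fun i => ∏ k ∈ Finset.Ico (n i) (n (i + 1)), g k) B' := by
    rintro _ ⟨B, hBmem, rfl⟩ i
    show (T B i).card = ∏ k ∈ Finset.Ico (n i) (n (i + 1)), g k
    rw [hTdef B i, Finset.card_image_of_injective _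
      (fun a b h => finPiFinEquiv.injective (Fin.val_injective h)),
      Fintype.card_piFinset]
    simp only [Finset.card_attachFin, htBcard]
    exact hprodg i
  -- coverage
  have hS2 : ∀ x' : ℕ → ℕ,
      (∀ i, x' i < (fun i => ∏ k ∈ Finset.Ico (n i) (n (i + 1)), f k) i) →
      ∃ B' ∈ T '' 𝓑, Covers B' x' := by
    intro x' hx'
    have hdspec : ∀ i, ∃ t : ∀ j : Fin (n (i + 1) - n i), Fin (f (n i + (j : ℕ))),
        ((finPiFinEquiv t : Fin _) : ℕ) = x' i := by
      intro i
      refine ⟨finPiFinEquiv.symm ⟨x' i, ?_⟩, by rw [Equiv.apply_symm_apply]⟩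
      rw [hprodf i]; exact hx' i
    choose d hd using hdspec
    set x : ℕ → ℕ := fun k =>
      (d (idx k) ⟨k - n (idx k), by
        have h1 := hidx1 k; have h2 := hidx2 k; omega⟩ : ℕ) with hxdef
    have hxval : ∀ i k (h1 : n i ≤ k) (h2 : k < n (i + 1)),
        x k = (d i ⟨k - n i, by omega⟩ : ℕ) := by
      intro i k h1 h2
      have h := huniq i k h1 h2
      subst h
      rfl
    have hxlt : ∀ k, x k < f k := by
      intro k
      have h1 := hidx1 k
      have h2 := hidx2 k
      have hlt := (d (idx k) ⟨k - n (idx k), by omega⟩).isLt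
      rw [hxval (idx k) k h1 h2]
      have harg : n (idx k) + (k - n (idx k)) = k := by omega
      exact lt_of_lt_of_eq hlt (congrArg f harg)
    obtain ⟨B, hBmem, hBcov⟩ := hB2 x hxlt
    refine ⟨T B, ⟨B, hBmem, rfl⟩, ?_⟩
    intro i
    rw [hTdef B i, Finset.mem_image]
    refine ⟨d i, ?_, hd i⟩
    rw [Fintype.mem_piFinset]
    intro j
    rw [Finset.mem_attachFin]
    have hk1 : n i ≤ n i + (j : ℕ) := Nat.le_add_right _ _
    have hk2 : n i + (j : ℕ) < n (i + 1) := by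
      have := j.isLt; omega
    have hj : (⟨n i + (j : ℕ) - n i, by omega⟩ : Fin (n (i + 1) - n i)) = j :=
      Fin.ext (by simp)
    have hxk : x (n i + (j : ℕ)) = (d i j : ℕ) :=
      (hxval i (n i + (j : ℕ)) hk1 hk2).trans
        (congrArg (fun t : Fin (n (i + 1) - n i) => ((d i t : ℕ))) hj)
    rw [← hxk]
    exact htBsub B (n i + (j : ℕ)) (hB1 B hBmem (n i + (j : ℕ)))
      (Finset.mem_inter.mpr ⟨hBcov _, Finset.mem_Iio.mpr (hxlt _)⟩)
  calc slalomCov (fun i => ∏ k ∈ Finset.Ico (n i) (n (i + 1)), f k)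
        (fun i => ∏ k ∈ Finset.Ico (n i) (n (i + 1)), g k)
      ≤ Cardinal.mk (T '' 𝓑 : Set (ℕ → Finset ℕ)) :=
        csInf_le (OrderBot.bddBelow _) ⟨T '' 𝓑, hS1, hS2, rfl⟩
    _ ≤ Cardinal.mk 𝓑 := Cardinal.mk_image_le
    _ = slalomCov f g := hB3.symm
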